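/- Let J₁, J₂ : ℝⁿ → ℝ be differentiable and suppose x* is Pareto optimal for (J₁, J₂) (no x satisfies Jᵢ(x) ≤ Jᵢ(x*) for i = 1,2 with strict inequality for at least one i). Then there exists t ∈ [0,1] with (1−t)∇J₁(x*) + t∇J₂(x*) = 0, i.e., x* solves the homotopy optimality condition H(x,t) = 0 for some t. -/

import Mathlib

open Filter

lemma descent_aux {n : ℕ} (J : EuclideanSpace ℝ (Fin n) → ℝ)
    (hJ : Differentiable ℝ J) (x d : EuclideanSpace ℝ (Fin n))
    (h : inner ℝ (gradient J x) d < (0 : ℝ)) :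
    ∀ᶠ s in nhdsWithin (0:ℝ) (Set.Ioi 0), J (x + s • d) < J x := by
  have hc : HasDerivAt (fun s : ℝ => x + s • d) d 0 := by
    simpa using ((hasDerivAt_id (0:ℝ)).smul_const d).const_add x
  have hF : HasFDerivAt J ((InnerProductSpace.toDual ℝ _) (gradient J x)) x :=
    (hJ x).hasGradientAt.hasFDerivAt
  have hF' : HasFDerivAt J ((InnerProductSpace.toDual ℝ _) (gradient J x))
      ((fun s : ℝ => x + s • d) 0) := by simpa using hF
  have hφ : HasDerivAt (fun s : ℝ => J (x + s • d))
      (inner ℝ (gradient J x) d : ℝ) 0 := by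
    have h' := hF'.comp_hasDerivAt 0 hc
    simp at h' ⊢
    exact h'
  have hslope := hasDerivAt_iff_tendsto_slope.mp hφ
  have hev : ∀ᶠ s in nhdsWithin (0:ℝ) {(0:ℝ)}ᶜ,
      slope (fun s : ℝ => J (x + s • d)) 0 s < 0 :=
    hslope.eventually_lt_const h
  have hsub : nhdsWithin (0:ℝ) (Set.Ioi 0) ≤ nhdsWithin (0:ℝ) {(0:ℝ)}ᶜ :=
    nhdsWithin_mono _ (fun s hs => ne_of_gt hs)
  filter_upwards [hsub hev, self_mem_nhdsWithin] with s hs hs0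
  have hspos : (0:ℝ) < s := hs0
  rw [slope_def_field] at hs
  have : (J (x + s • d) - J (x + (0:ℝ) • d)) / (s - 0) < 0 := by
    simpa [div_eq_iff] using hs
  simp only [zero_smul, add_zero, sub_zero] at this
  have h' : J (x + s • d) - J x < 0 * s := (div_lt_iff₀ hspos).mp this
  linarith

/-- First-order Fritz–John-type necessary condition for Pareto optimality: if `x*` is
Pareto optimal for differentiable `(J₁, J₂)`, then `(1−t)∇J₁(x*) + t∇J₂(x*) = 0` for
some `t ∈ [0,1]`, i.e. `x*` solves the homotopy optimality condition for some `t`. -/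
theorem pareto_optimal_fritz_john {n : ℕ}
    (J₁ J₂ : EuclideanSpace ℝ (Fin n) → ℝ)
    (hJ₁ : Differentiable ℝ J₁) (hJ₂ : Differentiable ℝ J₂)
    (xstar : EuclideanSpace ℝ (Fin n))
    (hpareto : ¬∃ x, J₁ x ≤ J₁ xstar ∧ J₂ x ≤ J₂ xstar ∧
      (J₁ x < J₁ xstar ∨ J₂ x < J₂ xstar)) :
    ∃ t ∈ Set.Icc (0 : ℝ) 1,
      (1 - t) • gradient J₁ xstar + t • gradient J₂ xstar = 0 := by
  set g₁ := gradient J₁ xstar with hg₁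
  set g₂ := gradient J₂ xstar with hg₂
  by_cases h1 : g₁ = 0
  · exact ⟨0, ⟨le_refl 0, zero_le_one⟩, by simp [h1]⟩
  by_cases h2 : g₂ = 0
  · exact ⟨1, ⟨zero_le_one, le_refl 1⟩, by simp [h2]⟩
  have hn1 : (0:ℝ) < ‖g₁‖ := norm_pos_iff.mpr h1
  have hn2 : (0:ℝ) < ‖g₂‖ := norm_pos_iff.mpr h2
  have CS : -(‖g₁‖ * ‖g₂‖) ≤ (inner ℝ g₁ g₂ : ℝ) := by
    have := real_inner_le_norm (-g₁) g₂
    simp only [inner_neg_left, norm_neg] at this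
    linarith
  rcases eq_or_lt_of_le CS with heq | hlt
  · -- antiparallel case
    have : (inner ℝ g₁ (-g₂) : ℝ) = ‖g₁‖ * ‖-g₂‖ := by
      simp only [inner_neg_right, norm_neg]; linarith
    have hkey : ‖-g₂‖ • g₁ = ‖g₁‖ • (-g₂) := inner_eq_norm_mul_iff_real.mp this
    rw [norm_neg] at hkey
    refine ⟨‖g₁‖ / (‖g₁‖ + ‖g₂‖), ⟨by positivity, ?_⟩, ?_⟩
    · rw [div_le_one (by linarith)]; linarith
    · have hd : ‖g₁‖ + ‖g₂‖ ≠ 0 := by positivity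
      have h1t : 1 - ‖g₁‖ / (‖g₁‖ + ‖g₂‖) = ‖g₂‖ / (‖g₁‖ + ‖g₂‖) := by
        field_simp
        ring
      rw [h1t, div_eq_inv_mul, div_eq_inv_mul, mul_smul, mul_smul, ← smul_add,
        hkey, smul_neg, neg_add_cancel, smul_zero]
  · -- separation case
    exfalso
    set d : EuclideanSpace ℝ (Fin n) := -(‖g₂‖ • g₁ + ‖g₁‖ • g₂) with hd
    have hip1 : (inner ℝ g₁ d : ℝ) < 0 := by
      rw [hd, inner_neg_right, inner_add_right, real_inner_smul_right,
        real_inner_smul_right, real_inner_self_eq_norm_mul_norm]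
      nlinarith [real_inner_comm g₁ g₂]
    have hip2 : (inner ℝ g₂ d : ℝ) < 0 := by
      rw [hd, inner_neg_right, inner_add_right, real_inner_smul_right,
        real_inner_smul_right, real_inner_self_eq_norm_mul_norm]
      nlinarith [real_inner_comm g₁ g₂]
    have e1 := descent_aux J₁ hJ₁ xstar d hip1
    have e2 := descent_aux J₂ hJ₂ xstar d hip2
    obtain ⟨s, hs1, hs2⟩ := (e1.and e2).exists
    exact hpareto ⟨xstar + s • d, le_of_lt hs1, le_of_lt hs2, Or.inl hs1⟩
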